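/- Let b₁,...,b_M be elements of a Banach space H, not all zero, and κ₁,...,κ_M distinct complex numbers with Re κ_m > 0. Then there exist c > 0 and δ > 0 such that ‖Σ_{m=1}^M b_m e^{κ_m t}‖ ≥ c e^{δ t} along a sequence t_n → ∞; in particular (1/t)‖∫₀ᵗ Σ_m b_m e^{κ_m s} ds‖ → ∞ along a sequence t_n → ∞. -/

import Mathlib

open Filter Complex MeasureTheory

lemma norm_exp_mul_real {z : ℂ} (s : ℝ) : ‖Complex.exp (z * s)‖ = Real.exp (z.re * s) := by
  rw [Complex.norm_exp]
  congr 1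
  simp [Complex.mul_re]

lemma norm_exp_le_one {z : ℂ} (hz : z.re ≤ 0) {s : ℝ} (hs : 0 ≤ s) :
    ‖Complex.exp (z * s)‖ ≤ 1 := by
  rw [norm_exp_mul_real]
  exact Real.exp_le_one_iff.mpr (mul_nonpos_of_nonpos_of_nonneg hz hs)

lemma key_growth {M : ℕ} (a κ : Fin M → ℂ) (hκinj : Function.Injective κ)
    (j : Fin M) (haj : a j ≠ 0) (hmax : ∀ m, a m ≠ 0 → (κ m).re ≤ (κ j).re) :
    ∃ t' : ℕ → ℝ, Tendsto t' atTop atTop ∧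
      ∀ n, (‖a j‖ / 2) * Real.exp ((κ j).re * t' n) ≤ ‖∑ m, a m * Complex.exp (κ m * t' n)‖ := by
  have hajpos : (0:ℝ) < ‖a j‖ := norm_pos_iff.mpr haj
  set δ := (κ j).re with hδ
  set g : ℝ → ℂ := fun t => ∑ m, a m * Complex.exp (κ m * t) with hg
  set h : ℝ → ℂ := fun t => ∑ m, a m * Complex.exp ((κ m - κ j) * t) with hh
  set C : ℝ := ∑ m ∈ Finset.univ.erase j, ‖a m‖ * 2 / ‖κ m - κ j‖ with hC
  have hCnn : 0 ≤ C := Finset.sum_nonneg fun m _ => by positivity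
  have hCdiv : 0 ≤ 2*C/‖a j‖ := div_nonneg (by linarith) hajpos.le
  clear_value C g h
  -- h t = g t / exp(κ j t)
  have hgh : ∀ t : ℝ, ‖h t‖ = ‖g t‖ / Real.exp (δ * t) := by
    intro t
    have : h t = g t / Complex.exp (κ j * t) := by
      rw [hg, hh, Finset.sum_div]
      refine Finset.sum_congr rfl fun m _ => ?_
      rw [sub_mul, Complex.exp_sub, mul_div_assoc]
    rw [this, norm_div, norm_exp_mul_real]
  -- integral lower bound
  have hlow : ∀ T : ℝ, 0 ≤ T → ‖a j‖ * T - C ≤ ‖∫ t in T..(2*T), h t‖ := by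
    intro T hT
    have hint : ∀ m ∈ Finset.univ (α := Fin M),
        IntervalIntegrable (fun t : ℝ => a m * Complex.exp ((κ m - κ j) * t)) volume T (2*T) := by
      intro m _
      exact (by continuity : Continuous fun t : ℝ => a m * Complex.exp ((κ m - κ j) * t)).intervalIntegrable T (2*T)
    have hsplit : (∫ t in T..(2*T), h t) =
        ∑ m, a m * ∫ t in T..(2*T), Complex.exp ((κ m - κ j) * t) := by
      rw [hh, intervalIntegral.integral_finset_sum hint]
      exact Finset.sum_congr rfl fun m _ => (intervalIntegral.integral_const_mul _ _)
    set F : Fin M → ℂ := fun m => a m * ∫ t in T..(2*T), Complex.exp ((κ m - κ j) * t) with hF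
    have hFj : F j = a j * T := by
      have h1 : (fun t : ℝ => Complex.exp ((κ j - κ j) * t)) = fun _ => (1:ℂ) := by
        funext t; simp
      rw [hF]
      simp only [h1, intervalIntegral.integral_const, Complex.real_smul]
      push_cast
      ring
    have hrest : ‖∑ m ∈ Finset.univ.erase j, F m‖ ≤ C := by
      refine le_trans ((norm_sum_le _ _).trans (Finset.sum_le_sum fun m hm => ?_)) (le_of_eq hC.symm)
      have hmj : m ≠ j := Finset.ne_of_mem_erase hm
      have hz : κ m - κ j ≠ 0 := sub_ne_zero.mpr (fun e => hmj (hκinj e))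
      show ‖a m * ∫ t in T..(2*T), Complex.exp ((κ m - κ j) * t)‖ ≤ ‖a m‖ * 2 / ‖κ m - κ j‖
      rcases eq_or_ne (a m) 0 with h0 | h0
      · simp only [h0, zero_mul, norm_zero]; positivity
      · have hre : (κ m - κ j).re ≤ 0 := by
          have := hmax m h0; simp only [Complex.sub_re]; linarith
        rw [integral_exp_mul_complex hz, norm_mul, norm_div, mul_div_assoc]
        gcongr
        calc ‖Complex.exp ((κ m - κ j) * (2*T:ℝ)) - Complex.exp ((κ m - κ j) * (T:ℝ))‖
            ≤ ‖Complex.exp ((κ m - κ j) * (2*T:ℝ))‖ + ‖Complex.exp ((κ m - κ j) * (T:ℝ))‖ :=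
              norm_sub_le _ _
          _ ≤ 1 + 1 := add_le_add (norm_exp_le_one hre (by linarith)) (norm_exp_le_one hre hT)
          _ = 2 := by norm_num
    have hsum : (∫ t in T..(2*T), h t) = F j + ∑ m ∈ Finset.univ.erase j, F m := by
      rw [hsplit, ← Finset.add_sum_erase _ F (Finset.mem_univ j)]
    have h1 : ‖F j‖ ≤ ‖∫ t in T..(2*T), h t‖ + C := by
      calc ‖F j‖ = ‖(∫ t in T..(2*T), h t) - ∑ m ∈ Finset.univ.erase j, F m‖ := by
            rw [hsum, add_sub_cancel_right]
        _ ≤ ‖∫ t in T..(2*T), h t‖ + ‖∑ m ∈ Finset.univ.erase j, F m‖ := norm_sub_le _ _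
        _ ≤ ‖∫ t in T..(2*T), h t‖ + C := by linarith
    have h2 : ‖F j‖ = ‖a j‖ * T := by
      rw [hFj, norm_mul, Complex.norm_real, Real.norm_of_nonneg hT]
    linarith
  -- per n find t
  have hstep : ∀ n : ℕ, ∃ t : ℝ, (n:ℝ) ≤ t ∧
      (‖a j‖/2) * Real.exp (δ * t) ≤ ‖g t‖ := by
    intro n
    set T : ℝ := 2*C/‖a j‖ + 1 + n with hT
    clear_value T
    have hT0 : 0 ≤ T := by
      have : (0:ℝ) ≤ n := Nat.cast_nonneg n
      rw [hT]; linarith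
    by_contra hcon
    push_neg at hcon
    have hbound : ∀ t ∈ Set.uIoc T (2*T), ‖h t‖ ≤ ‖a j‖/2 := by
      intro t ht
      rw [Set.uIoc_of_le (by linarith)] at ht
      have htT : (n:ℝ) ≤ t := by
        have := ht.1; rw [hT] at this; linarith
      have hlt : ‖g t‖ < (‖a j‖/2) * Real.exp (δ * t) := hcon t htT
      rw [hgh t, div_le_iff₀ (Real.exp_pos _)]
      nlinarith [Real.exp_pos (δ * t)]
    have hub : ‖∫ t in T..(2*T), h t‖ ≤ (‖a j‖/2) * T := by
      have := intervalIntegral.norm_integral_le_of_norm_le_const hbound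
      rwa [show |2*T - T| = T by rw [show 2*T - T = T by ring, _root_.abs_of_nonneg hT0]] at this
    have := hlow T hT0
    have hTE : T ≤ 2*C/‖a j‖ := by
      rw [le_div_iff₀ hajpos]
      nlinarith
    have : (0:ℝ) ≤ n := Nat.cast_nonneg n
    rw [hT] at hTE; linarith
  choose t' ht1 ht2 using hstep
  exact ⟨t', tendsto_atTop_mono ht1 tendsto_natCast_atTop_atTop,
    fun n => by simpa only [hg] using ht2 n⟩

lemma part1_growth {H : Type*} [NormedAddCommGroup H] [NormedSpace ℂ H]
    (M : ℕ) (b : Fin M → H) (hb : ∃ m, b m ≠ 0)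
    (κ : Fin M → ℂ) (hκpos : ∀ m, 0 < (κ m).re) (hκinj : Function.Injective κ) :
    ∃ c > (0:ℝ), ∃ δ > (0:ℝ), ∃ t' : ℕ → ℝ, Tendsto t' atTop atTop ∧
      ∀ n, c * Real.exp (δ * t' n) ≤ ‖∑ m, Complex.exp (κ m * t' n) • b m‖ := by
  classical
  obtain ⟨m₀, hm₀⟩ := hb
  obtain ⟨j, hj, hjmax⟩ := Finset.exists_max_image
    (Finset.univ.filter fun m => b m ≠ 0) (fun m => (κ m).re) ⟨m₀, by simp [hm₀]⟩
  have hbj : b j ≠ 0 := (Finset.mem_filter.mp hj).2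
  obtain ⟨φ, hφ1, hφ2⟩ := exists_dual_vector ℂ (b j) (norm_ne_zero_iff.mpr hbj)
  set a : Fin M → ℂ := fun m => φ (b m) with ha
  have haj : a j ≠ 0 := by
    have : a j = (‖b j‖ : ℂ) := hφ2
    rw [this]
    exact_mod_cast norm_ne_zero_iff.mpr hbj
  have hmax : ∀ m, a m ≠ 0 → (κ m).re ≤ (κ j).re := by
    intro m hm
    have hbm : b m ≠ 0 := fun e => hm (by simp [ha, e])
    exact hjmax m (Finset.mem_filter.mpr ⟨Finset.mem_univ m, hbm⟩)
  obtain ⟨t', htt, hbd⟩ := key_growth a κ hκinj j haj hmax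
  refine ⟨‖a j‖/2, half_pos (norm_pos_iff.mpr haj), (κ j).re, hκpos j, t', htt, fun n => ?_⟩
  refine (hbd n).trans ?_
  have heq : (∑ m, a m * Complex.exp (κ m * t' n))
      = φ (∑ m, Complex.exp (κ m * t' n) • b m) := by
    rw [map_sum]
    exact Finset.sum_congr rfl fun m _ => by
      rw [φ.map_smul, smul_eq_mul, mul_comm]
  rw [heq]
  calc ‖φ (∑ m, Complex.exp (κ m * t' n) • b m)‖
      ≤ ‖φ‖ * ‖∑ m, Complex.exp (κ m * t' n) • b m‖ := φ.le_opNorm _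
    _ = ‖∑ m, Complex.exp (κ m * t' n) • b m‖ := by rw [hφ1, one_mul]

/-- A nontrivial combination `Σ b_m e^{κ_m t}` of exponentials with distinct exponents
of positive real part grows at least like `c e^{δt}` along a sequence `t_n → ∞`; in
particular `(1/t)‖∫₀ᵗ Σ b_m e^{κ_m s} ds‖ → ∞` along a sequence. -/
theorem growing_exponential_modes_not_all_zero
    {H : Type*} [NormedAddCommGroup H] [NormedSpace ℂ H] [CompleteSpace H]
    (M : ℕ) (b : Fin M → H) (hb : ∃ m, b m ≠ 0)
    (κ : Fin M → ℂ) (hκpos : ∀ m, 0 < (κ m).re) (hκinj : Function.Injective κ) :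
    (∃ c > (0:ℝ), ∃ δ > (0:ℝ), ∃ t' : ℕ → ℝ, Tendsto t' atTop atTop ∧
      ∀ n, c * Real.exp (δ * t' n) ≤ ‖∑ m, Complex.exp (κ m * t' n) • b m‖) ∧
    (∃ s' : ℕ → ℝ, Tendsto s' atTop atTop ∧
      Tendsto (fun n => (1 / s' n) * ‖∫ s in (0:ℝ)..(s' n), ∑ m, Complex.exp (κ m * s) • b m‖)
        atTop atTop) := by
  constructor
  · exact part1_growth M b hb κ hκpos hκinj
  · have hκne : ∀ m, κ m ≠ 0 := by
      intro m e
      have := hκpos m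
      rw [e] at this
      simp at this
    set b' : Fin M → H := fun m => (κ m)⁻¹ • b m with hb'def
    have hb' : ∃ m, b' m ≠ 0 := by
      obtain ⟨m, hm⟩ := hb
      exact ⟨m, by
        show (κ m)⁻¹ • b m ≠ 0
        exact smul_ne_zero (inv_ne_zero (hκne m)) hm⟩
    obtain ⟨c, hc, δ, hδ, t', ht', hbd⟩ := part1_growth M b' hb' κ hκpos hκinj
    have hI : ∀ T : ℝ, (∫ s in (0:ℝ)..T, ∑ m, Complex.exp (κ m * s) • b m)
        = (∑ m, Complex.exp (κ m * T) • b' m) - ∑ m, b' m := by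
      intro T
      have hint : ∀ m ∈ Finset.univ (α := Fin M),
          IntervalIntegrable (fun s : ℝ => Complex.exp (κ m * s) • b m) volume 0 T :=
        fun m _ => ((by continuity :
          Continuous fun s : ℝ => Complex.exp (κ m * s) • b m).intervalIntegrable 0 T)
      rw [intervalIntegral.integral_finset_sum hint, ← Finset.sum_sub_distrib]
      refine Finset.sum_congr rfl fun m _ => ?_
      rw [intervalIntegral.integral_smul_const, integral_exp_mul_complex (hκne m)]
      show _ = Complex.exp (κ m * T) • (κ m)⁻¹ • b m - (κ m)⁻¹ • b m
      rw [smul_smul, ← sub_smul]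
      congr 1
      have h0 : Complex.exp (κ m * ((0:ℝ):ℂ)) = 1 := by norm_num
      rw [h0]
      field_simp
    refine ⟨t', ht', ?_⟩
    set K := ‖∑ m, b' m‖ with hK
    have hlow : ∀ n, (c * Real.exp (δ * t' n) - K)
        ≤ ‖∫ s in (0:ℝ)..(t' n), ∑ m, Complex.exp (κ m * s) • b m‖ := by
      intro n
      rw [hI]
      have h1 := hbd n
      have h2 := norm_sub_norm_le (∑ m, Complex.exp (κ m * t' n) • b' m) (∑ m, b' m)
      rw [← hK] at h2
      linarith
    have hψ : Tendsto (fun x : ℝ => (c * Real.exp (δ * x) - K)/x) atTop atTop := by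
      have h1 : Tendsto (fun x : ℝ => Real.exp x / x) atTop atTop := by
        simpa using Real.tendsto_exp_div_pow_atTop 1
      have h2 : Tendsto (fun x : ℝ => Real.exp (δ * x) / (δ * x)) atTop atTop :=
        h1.comp (Tendsto.const_mul_atTop hδ tendsto_id)
      have h3 : Tendsto (fun x : ℝ => (c*δ) * (Real.exp (δ * x)/(δ * x)) + (-K) * x⁻¹)
          atTop atTop := by
        have h4 : Tendsto (fun x : ℝ => (-K) * x⁻¹) atTop (nhds 0) := by
          simpa using tendsto_inv_atTop_zero.const_mul (-K)
        exact Tendsto.atTop_add (h2.const_mul_atTop (by positivity)) h4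
      refine h3.congr' ?_
      filter_upwards [eventually_gt_atTop 0] with x hx
      have hδ0 : δ ≠ 0 := ne_of_gt hδ
      field_simp
      ring
    refine tendsto_atTop_mono' atTop ?_ (hψ.comp ht')
    filter_upwards [ht'.eventually (eventually_gt_atTop 0)] with n hn
    show (c * Real.exp (δ * t' n) - K) / t' n
        ≤ (1 / t' n) * ‖∫ s in (0:ℝ)..(t' n), ∑ m, Complex.exp (κ m * s) • b m‖
    rw [one_div_mul_eq_div]
    gcongr
    exact hlow n
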